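/- arXiv:2412.15863 — 2 statements merged into one kernel-verified Lean document; each statement's English description precedes it below -/
import Mathlib

section
/- Let σ_{t-1}(x_t) denote GP posterior standard deviations with kernel bounded by k(x,x) ≤ 1 and λ = 1 + 2/T. Then ∑_{t=1}^T σ_{t-1}(x_t) ≤ √(4(T+2)·γ_T), where γ_T = max over query sequences of (1/2)log det(I + λ⁻¹K_T) is the maximum information gain. Equivalently, in finite dimensions: for vectors with ‖φ_t‖² ≤ 1 and V_t = λI + ∑_{s≤t}φ_sφ_sᵀ, ∑_{t=1}^T √(λ·φ_tᵀV_{t-1}⁻¹φ_t) ≤ √(4(T+2)·(1/2)log det(I + λ⁻¹K_T)). -/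
open Matrix Finset

private lemma psd_vecMulVec {m : Type*} [Fintype m] (v : m → ℝ) :
    (vecMulVec v v).PosSemidef := by
  have h := Matrix.posSemidef_conjTranspose_mul_self (Matrix.replicateRow Unit v)
  have e : (Matrix.replicateRow Unit v)ᴴ * Matrix.replicateRow Unit v = vecMulVec v v := by
    rw [vecMulVec_eq Unit]
    ext i j
    simp [Matrix.mul_apply, Matrix.replicateCol, Matrix.replicateRow]
  rwa [e] at h

private lemma det_rank_one_update {n : ℕ} {A : Matrix (Fin n) (Fin n) ℝ}
    (hA : A.PosDef) (v : Fin n → ℝ) :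
    (A + vecMulVec v v).det = A.det * (1 + v ⬝ᵥ A⁻¹ *ᵥ v) := by
  have h := Matrix.det_add_replicateCol_mul_replicateRow (ι := Unit) hA.det_pos.ne'.isUnit v v
  rw [← vecMulVec_eq Unit] at h
  rw [h]
  congr 1
  rw [Matrix.det_unique]
  simp only [Matrix.add_apply, Matrix.one_apply_eq, Matrix.mul_apply, Matrix.replicateRow_apply,
    Matrix.replicateCol_apply, Matrix.mulVec, dotProduct, Finset.mul_sum]
  congr 1
  rw [Finset.sum_comm]
  exact Finset.sum_congr rfl fun x _ => by rw [Finset.sum_mul]; exact Finset.sum_congr rfl fun i _ => by ring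


private lemma quad_bound {n : ℕ} {lam : ℝ} (hlam1 : 1 ≤ lam)
    {S : Matrix (Fin n) (Fin n) ℝ} (hS : S.PosSemidef) {v : Fin n → ℝ} (hv : v ⬝ᵥ v ≤ 1) :
    0 ≤ v ⬝ᵥ (lam • (1 : Matrix (Fin n) (Fin n) ℝ) + S)⁻¹ *ᵥ v ∧
      v ⬝ᵥ (lam • (1 : Matrix (Fin n) (Fin n) ℝ) + S)⁻¹ *ᵥ v ≤ lam⁻¹ := by
  have hlam0 : (0:ℝ) < lam := lt_of_lt_of_le one_pos hlam1
  set A : Matrix (Fin n) (Fin n) ℝ := lam • 1 + S with hAdef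
  have hA : A.PosDef := by
    refine Matrix.PosDef.add_posSemidef ?_ hS
    rw [Matrix.smul_one_eq_diagonal]
    exact Matrix.posDef_diagonal_iff.mpr fun _ => hlam0
  set y : Fin n → ℝ := A⁻¹ *ᵥ v with hy
  have hAy : A *ᵥ y = v := by
    rw [hy, Matrix.mulVec_mulVec, Matrix.mul_nonsing_inv _ hA.det_pos.ne'.isUnit,
      Matrix.one_mulVec]
  set w : ℝ := v ⬝ᵥ A⁻¹ *ᵥ v with hwdef
  have hwy : w = v ⬝ᵥ y := rfl
  have h0 : 0 ≤ w := by simpa using hA.inv.posSemidef.dotProduct_mulVec_nonneg v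
  have hyy : 0 ≤ y ⬝ᵥ y := by
    simp only [dotProduct]
    exact Finset.sum_nonneg fun i _ => mul_self_nonneg _
  have hvv : 0 ≤ v ⬝ᵥ v := by
    simp only [dotProduct]
    exact Finset.sum_nonneg fun i _ => mul_self_nonneg _
  have hlow : lam * (y ⬝ᵥ y) ≤ w := by
    have hSq : 0 ≤ y ⬝ᵥ S *ᵥ y := by simpa using hS.dotProduct_mulVec_nonneg y
    have : w = lam * (y ⬝ᵥ y) + y ⬝ᵥ S *ᵥ y := by
      rw [hwy, ← hAy, dotProduct_comm, hAdef, Matrix.add_mulVec,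
        dotProduct_add, Matrix.smul_mulVec, Matrix.one_mulVec,
        dotProduct_smul, smul_eq_mul]
    linarith
  have hCS : w ^ 2 ≤ (v ⬝ᵥ v) * (y ⬝ᵥ y) := by
    have := Finset.sum_mul_sq_le_sq_mul_sq Finset.univ v y
    simpa [hwy, dotProduct, pow_two] using this
  have hw2 : lam * w ^ 2 ≤ w := by
    calc lam * w ^ 2 ≤ lam * ((v ⬝ᵥ v) * (y ⬝ᵥ y)) := by
          exact mul_le_mul_of_nonneg_left hCS hlam0.le
      _ ≤ lam * (1 * (y ⬝ᵥ y)) :=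
          mul_le_mul_of_nonneg_left (mul_le_mul_of_nonneg_right hv hyy) hlam0.le
      _ = lam * (y ⬝ᵥ y) := by ring
      _ ≤ w := hlow
  refine ⟨h0, ?_⟩
  rcases eq_or_lt_of_le h0 with h | h
  · rw [← h]; positivity
  · have hlw : lam * w ≤ 1 := by nlinarith
    calc w = lam⁻¹ * (lam * w) := by field_simp
      _ ≤ lam⁻¹ * 1 := mul_le_mul_of_nonneg_left hlw (by positivity)
      _ = lam⁻¹ := mul_one _


private lemma le_two_log {w : ℝ} (h0 : 0 ≤ w) (h1 : w ≤ 1) : w ≤ 2 * Real.log (1 + w) := by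
  have hpos : (0:ℝ) < 1 + w := by linarith
  have h : Real.log (1/(1+w)) ≤ 1/(1+w) - 1 := Real.log_le_sub_one_of_pos (by positivity)
  rw [Real.log_div one_ne_zero (ne_of_gt hpos), Real.log_one, zero_sub] at h
  have hlog : 1 - 1/(1+w) ≤ Real.log (1+w) := by linarith
  have h2 : 1 - 1/(1+w) = w/(1+w) := by field_simp; ring
  have h3 : w ≤ 2 * (w/(1+w)) := by
    rw [mul_div_assoc']
    rw [le_div_iff₀ hpos]
    nlinarith
  rw [h2] at hlog
  linarith

/-- Cumulative posterior standard deviation bound (finite-dimensional form):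
for vectors with `‖φ t‖² ≤ 1`, `λ = 1 + 2/T`, and `V_{t-1} = λ I + ∑_{s<t} φ_s φ_sᵀ`,
`∑ t, √(λ · φ_tᵀ V_{t-1}⁻¹ φ_t) ≤ √(4 (T+2) · (1/2) log det (I + λ⁻¹ K))`. -/
theorem sum_posterior_stddev_le (n T : ℕ) (hT : 0 < T) (lam : ℝ)
    (hlam : lam = 1 + 2 / (T : ℝ)) (φ : Fin T → Fin n → ℝ)
    (hφ : ∀ t, φ t ⬝ᵥ φ t ≤ 1) :
    ∑ t : Fin T, Real.sqrt (lam * (φ t ⬝ᵥ ((lam • (1 : Matrix (Fin n) (Fin n) ℝ) +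
        ∑ s ∈ Finset.univ.filter (fun s => s < t),
          vecMulVec (φ s) (φ s))⁻¹ *ᵥ φ t)))
      ≤ Real.sqrt (4 * ((T : ℝ) + 2) *
        ((1 / 2) * Real.log (Matrix.det ((1 : Matrix (Fin T) (Fin T) ℝ) +
          lam⁻¹ • Matrix.of (fun i j : Fin T => φ i ⬝ᵥ φ j))))) := by
  have hTpos : (0:ℝ) < T := by exact_mod_cast hT
  have hlam1 : (1:ℝ) ≤ lam := by
    rw [hlam]; have : 0 ≤ 2 / (T:ℝ) := by positivity
    linarith
  have hlam0 : (0:ℝ) < lam := lt_of_lt_of_le one_pos hlam1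
  have hinv1 : lam⁻¹ ≤ 1 := by
    rw [inv_le_one_iff₀]; right; exact hlam1
  -- the sequence of regularized Gram matrices
  set A : ℕ → Matrix (Fin n) (Fin n) ℝ := fun k =>
    lam • 1 + ∑ s ∈ Finset.univ.filter (fun s : Fin T => (s:ℕ) < k),
      vecMulVec (φ s) (φ s) with hAdef
  have hSpsd : ∀ k : ℕ,
      (∑ s ∈ Finset.univ.filter (fun s : Fin T => (s:ℕ) < k),
        vecMulVec (φ s) (φ s)).PosSemidef := by
    intro k
    refine Finset.sum_induction _ _ (fun a b ha hb => ha.add hb) Matrix.PosSemidef.zero ?_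
    exact fun s _ => psd_vecMulVec (φ s)
  have hApos : ∀ k : ℕ, (A k).PosDef := by
    intro k
    refine Matrix.PosDef.add_posSemidef ?_ (hSpsd k)
    rw [Matrix.smul_one_eq_diagonal]
    exact Matrix.posDef_diagonal_iff.mpr fun _ => hlam0
  set w : Fin T → ℝ := fun t => φ t ⬝ᵥ (A (t:ℕ))⁻¹ *ᵥ φ t with hwdef
  have hw : ∀ t, 0 ≤ w t ∧ w t ≤ lam⁻¹ := fun t =>
    quad_bound hlam1 (hSpsd (t:ℕ)) (hφ t)
  -- rewrite the left-hand side
  have hLHS : ∀ t : Fin T,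
      (lam • (1 : Matrix (Fin n) (Fin n) ℝ) +
        ∑ s ∈ Finset.univ.filter (fun s => s < t), vecMulVec (φ s) (φ s)) = A (t:ℕ) := by
    intro t
    rw [hAdef]
    congr 1
  -- insertion identity for the filters
  have hfilter : ∀ t : Fin T,
      Finset.univ.filter (fun s : Fin T => (s:ℕ) < (t:ℕ)+1)
        = insert t (Finset.univ.filter (fun s : Fin T => (s:ℕ) < (t:ℕ))) := by
    intro t
    ext s
    simp only [Finset.mem_filter, Finset.mem_univ, true_and, Finset.mem_insert]
    rw [Nat.lt_succ_iff_lt_or_eq, or_comm, Fin.ext_iff]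
  -- one-step determinant recursion
  have hstep : ∀ t : Fin T, (A ((t:ℕ)+1)).det = (A (t:ℕ)).det * (1 + w t) := by
    intro t
    have hsplit : A ((t:ℕ)+1) = A (t:ℕ) + vecMulVec (φ t) (φ t) := by
      rw [hAdef]
      simp only
      rw [hfilter t, Finset.sum_insert (by simp)]
      abel
    rw [hsplit, det_rank_one_update (hApos (t:ℕ)) (φ t)]
  -- telescoping
  have htel : ∀ k : ℕ, k ≤ T → (A k).det =
      (A 0).det * ∏ t ∈ Finset.univ.filter (fun t : Fin T => (t:ℕ) < k), (1 + w t) := by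
    intro k
    induction k with
    | zero => intro _; simp
    | succ k ih =>
      intro hk
      have hkT : k < T := hk
      set t : Fin T := ⟨k, hkT⟩ with ht
      have hco : ((t:ℕ)) = k := rfl
      have h1 : (A (k+1)).det = (A k).det * (1 + w t) := by
        have := hstep t
        rwa [hco] at this
      rw [h1, ih (le_of_lt hkT)]
      have h2 : Finset.univ.filter (fun s : Fin T => (s:ℕ) < k+1)
          = insert t (Finset.univ.filter (fun s : Fin T => (s:ℕ) < k)) := by
        have := hfilter t
        rwa [hco] at this
      rw [h2, Finset.prod_insert (by simp [hco])]
      ring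
  have hdet_prod : (A T).det = (A 0).det * ∏ t : Fin T, (1 + w t) := by
    have := htel T le_rfl
    rwa [Finset.filter_true_of_mem (fun t _ => t.isLt)] at this
  -- Weinstein–Aronszajn: identify with the T×T Gram determinant
  set Φ : Matrix (Fin T) (Fin n) ℝ := Matrix.of φ with hPhi
  have hK : Matrix.of (fun i j : Fin T => φ i ⬝ᵥ φ j) = Φ * Φᵀ := by
    ext i j
    simp [hPhi, Matrix.mul_apply, dotProduct]
  have hGram : Φᵀ * Φ = ∑ s : Fin T, vecMulVec (φ s) (φ s) := by
    ext i j
    simp [hPhi, Matrix.mul_apply, Matrix.sum_apply, vecMulVec_apply, mul_comm]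
  have hAT : A T = lam • ((1 : Matrix (Fin n) (Fin n) ℝ) + lam⁻¹ • (Φᵀ * Φ)) := by
    rw [hAdef]
    simp only
    rw [Finset.filter_true_of_mem (fun t _ => t.isLt), smul_add, smul_smul,
      mul_inv_cancel₀ (ne_of_gt hlam0), one_smul, hGram]
  have hA0 : (A 0).det = lam ^ n := by
    rw [hAdef]
    simp [Matrix.smul_one_eq_diagonal, Matrix.det_diagonal]
  have hdetswap : ((1 : Matrix (Fin T) (Fin T) ℝ) +
      lam⁻¹ • Matrix.of (fun i j : Fin T => φ i ⬝ᵥ φ j)).det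
      = ((1 : Matrix (Fin n) (Fin n) ℝ) + lam⁻¹ • (Φᵀ * Φ)).det := by
    rw [hK]
    have h1 : lam⁻¹ • (Φ * Φᵀ) = Φ * (lam⁻¹ • Φᵀ) := by
      rw [Matrix.mul_smul]
    have h2 : lam⁻¹ • (Φᵀ * Φ) = (lam⁻¹ • Φᵀ) * Φ := by
      rw [Matrix.smul_mul]
    rw [h1, h2, add_comm (1 : Matrix (Fin T) (Fin T) ℝ),
      add_comm (1 : Matrix (Fin n) (Fin n) ℝ), Matrix.det_mul_add_one_comm]
  have hATdet : (A T).det = lam ^ n * ((1 : Matrix (Fin n) (Fin n) ℝ) +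
      lam⁻¹ • (Φᵀ * Φ)).det := by
    rw [hAT, Matrix.det_smul, Fintype.card_fin]
  have hKdet : ((1 : Matrix (Fin T) (Fin T) ℝ) +
      lam⁻¹ • Matrix.of (fun i j : Fin T => φ i ⬝ᵥ φ j)).det
      = ∏ t : Fin T, (1 + w t) := by
    have hlamn : (0:ℝ) < lam ^ n := by positivity
    rw [hdetswap]
    have := hdet_prod
    rw [hATdet, hA0] at this
    exact mul_left_cancel₀ (ne_of_gt hlamn) this
  -- log of the determinant
  set L : ℝ := Real.log (((1 : Matrix (Fin T) (Fin T) ℝ) +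
      lam⁻¹ • Matrix.of (fun i j : Fin T => φ i ⬝ᵥ φ j)).det) with hLdef
  have h1w : ∀ t : Fin T, (0:ℝ) < 1 + w t := fun t => by linarith [(hw t).1]
  have hLsum : L = ∑ t : Fin T, Real.log (1 + w t) := by
    rw [hLdef, hKdet]
    exact Real.log_prod fun t _ => ne_of_gt (h1w t)
  have hlog0 : ∀ t : Fin T, 0 ≤ Real.log (1 + w t) := fun t =>
    Real.log_nonneg (by linarith [(hw t).1])
  have hL0 : 0 ≤ L := by
    rw [hLsum]; exact Finset.sum_nonneg fun t _ => hlog0 t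
  -- Cauchy–Schwarz and per-term elementary bound
  rw [show (∑ t : Fin T, Real.sqrt (lam * (φ t ⬝ᵥ ((lam • (1 : Matrix (Fin n) (Fin n) ℝ) +
        ∑ s ∈ Finset.univ.filter (fun s => s < t),
          vecMulVec (φ s) (φ s))⁻¹ *ᵥ φ t)))) =
      ∑ t : Fin T, Real.sqrt (lam * w t) from
    Finset.sum_congr rfl fun t _ => by rw [hLHS t]]
  set Sm : ℝ := ∑ t : Fin T, Real.sqrt (lam * w t) with hSm
  have hSm0 : 0 ≤ Sm := Finset.sum_nonneg fun t _ => Real.sqrt_nonneg _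
  have hCS : Sm ^ 2 ≤ (T:ℝ) * ∑ t : Fin T, lam * w t := by
    have h := sq_sum_le_card_mul_sum_sq (s := (Finset.univ : Finset (Fin T)))
      (f := fun t => Real.sqrt (lam * w t))
    have heq : ∀ t : Fin T, Real.sqrt (lam * w t) ^ 2 = lam * w t := fun t =>
      Real.sq_sqrt (mul_nonneg hlam0.le (hw t).1)
    calc Sm ^ 2 ≤ (Finset.univ.card : ℝ) * ∑ t : Fin T, Real.sqrt (lam * w t) ^ 2 := by
          exact_mod_cast h
      _ = (T:ℝ) * ∑ t : Fin T, lam * w t := by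
          rw [Finset.card_univ, Fintype.card_fin]
          congr 1
          exact Finset.sum_congr rfl fun t _ => heq t
  have hterm : ∀ t : Fin T, lam * w t ≤ 2 * lam * Real.log (1 + w t) := by
    intro t
    have h2l := le_two_log (hw t).1 ((hw t).2.trans hinv1)
    calc lam * w t ≤ lam * (2 * Real.log (1 + w t)) :=
          mul_le_mul_of_nonneg_left h2l hlam0.le
      _ = 2 * lam * Real.log (1 + w t) := by ring
  have hsum2 : ∑ t : Fin T, lam * w t ≤ 2 * lam * L := by
    calc ∑ t : Fin T, lam * w t ≤ ∑ t : Fin T, 2 * lam * Real.log (1 + w t) :=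
          Finset.sum_le_sum fun t _ => hterm t
      _ = 2 * lam * L := by rw [hLsum, Finset.mul_sum]
  have hTlam : (T:ℝ) * lam = (T:ℝ) + 2 := by
    rw [hlam]; field_simp
  have hfinal : Sm ^ 2 ≤ 4 * ((T:ℝ) + 2) * ((1/2) * L) := by
    have : (T:ℝ) * (2 * lam * L) = 2 * ((T:ℝ) + 2) * L := by
      rw [← hTlam]; ring
    calc Sm ^ 2 ≤ (T:ℝ) * ∑ t : Fin T, lam * w t := hCS
      _ ≤ (T:ℝ) * (2 * lam * L) := mul_le_mul_of_nonneg_left hsum2 hTpos.le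
      _ = 2 * ((T:ℝ) + 2) * L := this
      _ = 4 * ((T:ℝ) + 2) * ((1/2) * L) := by ring
  calc Sm = Real.sqrt (Sm ^ 2) := (Real.sqrt_sq hSm0).symm
    _ ≤ Real.sqrt (4 * ((T:ℝ) + 2) * ((1/2) * L)) := Real.sqrt_le_sqrt hfinal
end

section
/- Let X_t be a nonnegative stochastic process adapted to a filtration {F_t} with conditional means m_t = E[X_t | F_{t−1}], and suppose X_t ≤ b_t for a fixed nondecreasing sequence (b_t) with b_T ≥ 1. Then with probability at least 1 − δ, for any T ≥ 1, ∑_{t=1}^T m_t ≤ 2∑_{t=1}^T X_t + 4 b_T log(1/δ) + 8 b_T log(4 b_T) + 1. -/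
open MeasureTheory Finset
open scoped ENNReal NNReal

lemma exp_neg_le_quadratic {x : ℝ} (hx : 0 ≤ x) :
    Real.exp (-x) ≤ 1 - x + x ^ 2 / 2 := by
  set g : ℝ → ℝ := fun z => 1 - z + z ^ 2 / 2 - Real.exp (-z) with hg
  have hd : ∀ y : ℝ, HasDerivAt g (-1 + y + Real.exp (-y) * 1) y := by
    intro y
    have h1 : HasDerivAt (fun z : ℝ => Real.exp (-z)) (Real.exp (-y) * (-1)) y :=
      (Real.hasDerivAt_exp (-y)).comp y ((hasDerivAt_id y).neg)
    have h2 : HasDerivAt (fun z : ℝ => 1 - z + z ^ 2 / 2) (-1 + 2 * y / 2) y := by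
      refine (((hasDerivAt_const y (1:ℝ)).sub (hasDerivAt_id' y)).add
        ((hasDerivAt_pow 2 y).div_const 2)).congr_deriv ?_
      norm_num
    refine (h2.sub h1).congr_deriv ?_
    ring
  have hmono : MonotoneOn g (Set.Ici (0:ℝ)) := by
    apply monotoneOn_of_deriv_nonneg (convex_Ici 0)
    · exact (Continuous.continuousOn (by continuity))
    · exact fun y _ => (hd y).differentiableAt.differentiableWithinAt
    · intro y hy
      rw [interior_Ici] at hy
      rw [(hd y).deriv]
      have := Real.add_one_le_exp (-y)
      nlinarith [Real.exp_pos (-y)]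
  have h0 : g 0 = 0 := by simp [hg]
  have := hmono (Set.self_mem_Ici) hx hx
  rw [h0] at this
  simp only [hg] at this
  linarith

lemma condexp_exp_neg_le {Ω : Type*} {m0 : MeasurableSpace Ω}
    {μ : Measure Ω} [IsProbabilityMeasure μ] {m : MeasurableSpace Ω} (hm : m ≤ m0)
    {Y : Ω → ℝ} (hYm : StronglyMeasurable[m0] Y) (hYnn : ∀ ω, 0 ≤ Y ω)
    {c : ℝ} (hYc : ∀ ω, Y ω ≤ c) {l : ℝ} (hl : 0 ≤ l) :
    μ[fun ω => Real.exp (-(l * Y ω))|m] ≤ᵐ[μ]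
      fun ω => Real.exp ((l ^ 2 * c / 2 - l) * (μ[Y|m]) ω) := by
  have hYint : Integrable Y μ := by
    refine Integrable.mono' (integrable_const c) hYm.aestronglyMeasurable ?_
    filter_upwards with ω
    rw [Real.norm_eq_abs, abs_of_nonneg (hYnn ω)]; exact hYc ω
  have hexpmeas : StronglyMeasurable[m0] fun ω => Real.exp (-(l * Y ω)) :=
    Real.continuous_exp.comp_stronglyMeasurable ((hYm.const_mul l).neg)
  have hexpint : Integrable (fun ω => Real.exp (-(l * Y ω))) μ := by
    refine Integrable.mono' (integrable_const 1) hexpmeas.aestronglyMeasurable ?_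
    filter_upwards with ω
    rw [Real.norm_eq_abs, abs_of_pos (Real.exp_pos _)]
    exact Real.exp_le_one_iff.2 (by nlinarith [mul_nonneg hl (hYnn ω)])
  set d : ℝ := l ^ 2 * c / 2 - l with hd
  have hptwise : ∀ ω, Real.exp (-(l * Y ω)) ≤ 1 + d * Y ω := by
    intro ω
    have h1 := exp_neg_le_quadratic (mul_nonneg hl (hYnn ω))
    have h2 : Y ω * Y ω ≤ c * Y ω := mul_le_mul_of_nonneg_right (hYc ω) (hYnn ω)
    have h3 : l ^ 2 * (Y ω * Y ω) ≤ l ^ 2 * (c * Y ω) :=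
      mul_le_mul_of_nonneg_left h2 (sq_nonneg l)
    calc Real.exp (-(l * Y ω)) ≤ 1 - l * Y ω + (l * Y ω) ^ 2 / 2 := h1
      _ = 1 - l * Y ω + l ^ 2 * (Y ω * Y ω) / 2 := by ring
      _ ≤ 1 - l * Y ω + l ^ 2 * (c * Y ω) / 2 := by linarith
      _ = 1 + d * Y ω := by rw [hd]; ring
  have hint2 : Integrable (fun ω => 1 + d * Y ω) μ :=
    (integrable_const 1).add (hYint.const_mul d)
  have h1 : μ[fun ω => Real.exp (-(l * Y ω))|m] ≤ᵐ[μ] μ[fun ω => 1 + d * Y ω|m] :=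
    condExp_mono hexpint hint2 (Filter.Eventually.of_forall hptwise)
  have h2 : μ[fun ω => 1 + d * Y ω|m] =ᵐ[μ] fun ω => 1 + d * (μ[Y|m]) ω := by
    have ha : (fun ω => 1 + d * Y ω) = (fun _ => (1:ℝ)) + d • Y := by
      funext ω; simp [smul_eq_mul]
    rw [ha]
    refine (condExp_add (integrable_const 1) (hYint.smul d) m).trans ?_
    have hc := condExp_const hm (1:ℝ) (μ := μ)
    have hs := condExp_smul (μ := μ) d Y m
    filter_upwards [hs] with ω hω2
    simp only [Pi.add_apply, congrFun hc ω, hω2, Pi.smul_apply, smul_eq_mul]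
  filter_upwards [h1, h2] with ω hω1 hω2
  refine le_trans (hω1.trans hω2.le) ?_
  have := Real.add_one_le_exp (d * (μ[Y|m]) ω)
  linarith

lemma supermartingale_exp {Ω : Type*} {m0 : MeasurableSpace Ω}
    (μ : Measure Ω) [IsProbabilityMeasure μ] (F : Filtration ℕ m0)
    (X : ℕ → Ω → ℝ) (hadapt : Adapted F X) (hnn : ∀ t ω, 0 ≤ X t ω)
    (b : ℕ → ℝ) (hb0 : ∀ t, 0 ≤ b t) (hX : ∀ t ω, X t ω ≤ b t)
    {l : ℝ} (hl : 0 ≤ l) :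
    Supermartingale (fun n ω => Real.exp (∑ t ∈ Finset.Icc 1 n,
      (l * (1 - l * b t / 2) * (μ[X t|F (t - 1)]) ω - l * X t ω))) F μ := by
  set m : ℕ → Ω → ℝ := fun t => μ[X t|F (t - 1)] with hm_def
  set S : ℕ → Ω → ℝ := fun n ω => ∑ t ∈ Finset.Icc 1 n,
      (l * (1 - l * b t / 2) * m t ω - l * X t ω) with hS_def
  set M : ℕ → Ω → ℝ := fun n ω => Real.exp (S n ω) with hM_def
  -- basic facts
  have hXm : ∀ t, StronglyMeasurable[m0] (X t) := fun t => (hadapt t).stronglyMeasurable.mono (F.le t)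
  have hXint : ∀ t, Integrable (X t) μ := by
    intro t
    refine Integrable.mono' (integrable_const (b t))
      ((hXm t).aestronglyMeasurable : AEStronglyMeasurable _ μ) ?_
    filter_upwards with ω
    rw [Real.norm_eq_abs, abs_of_nonneg (hnn t ω)]; exact hX t ω
  have hm_meas : ∀ t, StronglyMeasurable[F (t - 1)] (m t) := fun t => stronglyMeasurable_condExp
  have hm_bd : ∀ t, ∀ᵐ ω ∂μ, 0 ≤ m t ω ∧ m t ω ≤ b t := by
    intro t
    have h1 : (0:Ω → ℝ) ≤ᵐ[μ] m t :=
      condExp_nonneg (Filter.Eventually.of_forall (fun ω => hnn t ω))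
    have h2 : m t ≤ᵐ[μ] μ[(fun _ => b t)|F (t - 1)] :=
      condExp_mono (hXint t) (integrable_const (b t))
        (Filter.Eventually.of_forall (fun ω => hX t ω))
    have h3 := condExp_const (F.le (t - 1)) (b t) (μ := μ)
    filter_upwards [h1, h2] with ω hω1 hω2
    exact ⟨hω1, le_trans hω2 (by rw [h3])⟩
  -- measurability of S n and M n
  have hS_meas : ∀ n, StronglyMeasurable[F n] (S n) := by
    intro n
    apply Finset.stronglyMeasurable_fun_sum
    intro t ht
    rw [Finset.mem_Icc] at ht
    exact (((hm_meas t).mono (F.mono (le_trans (Nat.sub_le t 1) ht.2))).const_mul _).sub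
      (((hadapt t).stronglyMeasurable.mono (F.mono ht.2)).const_mul l)
  have hM_meas : ∀ n, StronglyMeasurable[F n] (M n) := fun n =>
    Real.continuous_exp.comp_stronglyMeasurable (hS_meas n)
  -- a.e. bound on M n
  have hm_bd_all : ∀ᵐ ω ∂μ, ∀ t, 0 ≤ m t ω ∧ m t ω ≤ b t := ae_all_iff.2 hm_bd
  have hterm_le : ∀ t ω, 0 ≤ m t ω → m t ω ≤ b t →
      l * (1 - l * b t / 2) * m t ω - l * X t ω ≤ l * b t := by
    intro t ω h0 h1
    have e1 : l * m t ω ≤ l * b t := mul_le_mul_of_nonneg_left h1 hl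
    have e2 : 0 ≤ l * X t ω := mul_nonneg hl (hnn t ω)
    have e3 : 0 ≤ l * (l * b t / 2) * m t ω :=
      mul_nonneg (mul_nonneg hl (div_nonneg (mul_nonneg hl (hb0 t)) (by norm_num))) h0
    nlinarith
  have hM_bd : ∀ n, ∀ᵐ ω ∂μ, M n ω ≤ Real.exp (∑ t ∈ Finset.Icc 1 n, l * b t) := by
    intro n
    filter_upwards [hm_bd_all] with ω hω
    apply Real.exp_le_exp.2
    exact Finset.sum_le_sum fun t _ => hterm_le t ω (hω t).1 (hω t).2
  have hM_int : ∀ n, Integrable (M n) μ := by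
    intro n
    refine Integrable.mono' (integrable_const (Real.exp (∑ t ∈ Finset.Icc 1 n, l * b t)))
      (((hM_meas n).mono (F.le n)).aestronglyMeasurable : AEStronglyMeasurable _ μ) ?_
    filter_upwards [hM_bd n] with ω hω
    rw [Real.norm_eq_abs, abs_of_pos (Real.exp_pos _)]
    exact hω
  refine supermartingale_nat (fun n => hM_meas n) hM_int ?_
  intro n
  -- decompose M (n+1) = G * H
  set A : Ω → ℝ := fun ω => l * (1 - l * b (n + 1) / 2) * m (n + 1) ω with hA_def
  set G : Ω → ℝ := fun ω => M n ω * Real.exp (A ω) with hG_def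
  set H : Ω → ℝ := fun ω => Real.exp (-(l * X (n + 1) ω)) with hH_def
  have hsplit : M (n + 1) = G * H := by
    funext ω
    simp only [hM_def, hS_def, hG_def, hH_def, Pi.mul_apply]
    rw [Finset.sum_Icc_succ_top (Nat.le_add_left 1 n)]
    rw [show (∑ t ∈ Finset.Icc 1 n, (l * (1 - l * b t / 2) * m t ω - l * X t ω)) +
        (l * (1 - l * b (n+1) / 2) * m (n+1) ω - l * X (n+1) ω) =
        (∑ t ∈ Finset.Icc 1 n, (l * (1 - l * b t / 2) * m t ω - l * X t ω)) +
        (A ω + -(l * X (n+1) ω)) by rw [hA_def]; ring]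
    rw [Real.exp_add, Real.exp_add]
    ring
  have hmn : m (n + 1) = μ[X (n + 1)|F n] := rfl
  have hG_meas : StronglyMeasurable[F n] G :=
    (hM_meas n).mul (Real.continuous_exp.comp_stronglyMeasurable
      ((stronglyMeasurable_condExp (f := X (n+1)) (m := F n)).const_mul _))
  have hH_meas : StronglyMeasurable[m0] H :=
    Real.continuous_exp.comp_stronglyMeasurable (((hXm (n+1)).const_mul l).neg)
  have hH_le_one : ∀ ω, H ω ≤ 1 := by
    intro ω
    exact Real.exp_le_one_iff.2 (neg_nonpos.2 (mul_nonneg hl (hnn _ ω)))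
  have hH_pos : ∀ ω, 0 < H ω := fun ω => Real.exp_pos _
  have hH_int : Integrable H μ := by
    refine Integrable.mono' (integrable_const 1)
      (hH_meas.aestronglyMeasurable : AEStronglyMeasurable _ μ) ?_
    filter_upwards with ω
    rw [Real.norm_eq_abs, abs_of_pos (hH_pos ω)]; exact hH_le_one ω
  have hG_bd : ∀ᵐ ω ∂μ, G ω ≤ Real.exp (∑ t ∈ Finset.Icc 1 n, l * b t) *
      Real.exp (l * b (n + 1)) := by
    filter_upwards [hM_bd n, hm_bd (n + 1)] with ω hω1 hω2
    have hA_le : A ω ≤ l * b (n + 1) := by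
      have e1 : l * m (n+1) ω ≤ l * b (n+1) := mul_le_mul_of_nonneg_left hω2.2 hl
      have e3 : 0 ≤ l * (l * b (n+1) / 2) * m (n+1) ω :=
        mul_nonneg (mul_nonneg hl (div_nonneg (mul_nonneg hl (hb0 _)) (by norm_num))) hω2.1
      simp only [hA_def]; nlinarith
    exact mul_le_mul hω1 (Real.exp_le_exp.2 hA_le) (Real.exp_pos _).le (Real.exp_pos _).le
  have hG_nn : ∀ ω, 0 ≤ G ω := fun ω => mul_nonneg (Real.exp_pos _).le (Real.exp_pos _).le
  have hG_int : Integrable G μ := by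
    refine Integrable.mono' (integrable_const
        (Real.exp (∑ t ∈ Finset.Icc 1 n, l * b t) * Real.exp (l * b (n + 1))))
      (((hG_meas).mono (F.le n)).aestronglyMeasurable : AEStronglyMeasurable _ μ) ?_
    filter_upwards [hG_bd] with ω hω
    rw [Real.norm_eq_abs, abs_of_nonneg (hG_nn ω)]; exact hω
  have hGH_int : Integrable (G * H) μ := by
    refine Integrable.mono' hG_int
      ((((hG_meas).mono (F.le n)).mul hH_meas).aestronglyMeasurable : AEStronglyMeasurable _ μ) ?_
    filter_upwards with ω
    rw [Pi.mul_apply, Real.norm_eq_abs, abs_of_nonneg (mul_nonneg (hG_nn ω) (hH_pos ω).le)]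
    calc G ω * H ω ≤ G ω * 1 := mul_le_mul_of_nonneg_left (hH_le_one ω) (hG_nn ω)
      _ = G ω := mul_one _
  -- pull out and bound
  have hpull : μ[M (n + 1)|F n] =ᵐ[μ] G * μ[H|F n] := by
    rw [hsplit]
    exact condExp_mul_of_stronglyMeasurable_left hG_meas hGH_int hH_int
  have hcond : μ[H|F n] ≤ᵐ[μ]
      fun ω => Real.exp ((l ^ 2 * b (n + 1) / 2 - l) * (μ[X (n + 1)|F n]) ω) :=
    condexp_exp_neg_le (F.le n) (hXm (n + 1)) (hnn (n + 1)) (hX (n + 1)) hl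
  filter_upwards [hpull, hcond] with ω hω1 hω2
  rw [hω1]
  calc G ω * (μ[H|F n]) ω ≤ G ω * Real.exp ((l ^ 2 * b (n + 1) / 2 - l) * (μ[X (n + 1)|F n]) ω) :=
        mul_le_mul_of_nonneg_left hω2 (hG_nn ω)
    _ = M n ω * Real.exp (A ω + (l ^ 2 * b (n + 1) / 2 - l) * m (n + 1) ω) := by
        rw [hG_def, Real.exp_add, hmn]; ring
    _ = M n ω := by
        rw [show A ω + (l ^ 2 * b (n + 1) / 2 - l) * m (n + 1) ω = 0 by rw [hA_def]; ring]
        simp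

lemma ville_ineq {Ω : Type*} {m0 : MeasurableSpace Ω} {μ : Measure Ω}
    [IsProbabilityMeasure μ] {F : Filtration ℕ m0} {f : ℕ → Ω → ℝ}
    (hf : Supermartingale f F μ) (hnn : ∀ n ω, 0 ≤ f n ω) {c : ℝ} (hc : 0 < c) :
    μ {ω | ∃ n, c ≤ f n ω} ≤ ENNReal.ofReal ((∫ ω, f 0 ω ∂μ) / c) := by
  set A : ℕ → Set Ω := fun n => {ω | ∃ k, k ≤ n ∧ c ≤ f k ω} with hA_def
  have hfmeas : ∀ k, StronglyMeasurable[m0] (f k) := fun k => (hf.stronglyMeasurable k).mono (F.le k)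
  have hAmeas : ∀ n, MeasurableSet (A n) := by
    intro n
    have : A n = ⋃ k ∈ Set.Iic n, {ω | c ≤ f k ω} := by
      ext ω; simp [hA_def]
    rw [this]
    exact MeasurableSet.biUnion (Set.to_countable _)
      (fun k _ => measurableSet_le measurable_const (hfmeas k).measurable)
  have hAmono : Monotone A := by
    intro i j hij ω ⟨k, hk, hck⟩
    exact ⟨k, hk.trans hij, hck⟩
  have hInonneg : 0 ≤ ∫ ω, f 0 ω ∂μ := integral_nonneg (hnn 0)
  have key : ∀ n, μ (A n) ≤ ENNReal.ofReal ((∫ ω, f 0 ω ∂μ) / c) := by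
    intro n
    set τ : Ω → WithTop ℕ := fun ω => (hittingBtwn f (Set.Ici c) 0 n ω : ℕ) with hτ_def
    have hτ : IsStoppingTime F τ :=
      Adapted.isStoppingTime_hittingBtwn hf.stronglyAdapted.adapted measurableSet_Ici
    have hτ_le : ∀ ω, τ ω ≤ n := fun ω => WithTop.coe_le_coe.2 (hittingBtwn_le ω)
    have hsv_int : Integrable (stoppedValue f τ) μ :=
      integrable_stoppedValue ℕ hτ hf.integrable hτ_le
    have hsv_nn : ∀ ω, 0 ≤ stoppedValue f τ ω := fun ω => hnn _ ω
    -- optional stopping for the supermartingale (via its negation)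
    have hexp : ∫ ω, stoppedValue f τ ω ∂μ ≤ ∫ ω, f 0 ω ∂μ := by
      have hneg := hf.neg
      have h := hneg.expected_stoppedValue_mono (isStoppingTime_const F 0) hτ
        (fun ω => WithTop.coe_le_coe.2 (Nat.zero_le _)) hτ_le
      have e1 : stoppedValue (-f) (fun _ => ((0:ℕ) : WithTop ℕ)) = fun ω => -(f 0 ω) := rfl
      have e2 : stoppedValue (-f) τ = fun ω => -(stoppedValue f τ ω) := rfl
      change ∫ ω, -(f 0 ω) ∂μ ≤ ∫ ω, -(stoppedValue f τ ω) ∂μ at h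
      rw [integral_neg, integral_neg] at h
      have : ∫ ω, stoppedValue f (fun _ => (0:ℕ)) ω ∂μ = ∫ ω, f 0 ω ∂μ := rfl
      linarith [h]
    have hon : ∀ ω ∈ A n, c ≤ stoppedValue f τ ω := by
      intro ω hω
      obtain ⟨k, hk, hck⟩ := hω
      have : stoppedValue f τ ω ∈ Set.Ici c :=
        stoppedValue_hittingBtwn_mem ⟨k, ⟨Nat.zero_le _, hk⟩, hck⟩
      exact this
    have hlow : c * (μ (A n)).toReal ≤ ∫ ω in A n, stoppedValue f τ ω ∂μ :=
      by have := setIntegral_ge_of_const_le (hAmeas n) (measure_ne_top μ _) hon hsv_int.integrableOn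
         rw [smul_eq_mul, mul_comm] at this; exact this
    have hup : ∫ ω in A n, stoppedValue f τ ω ∂μ ≤ ∫ ω, stoppedValue f τ ω ∂μ :=
      setIntegral_le_integral hsv_int (Filter.Eventually.of_forall hsv_nn)
    have : (μ (A n)).toReal ≤ (∫ ω, f 0 ω ∂μ) / c := by
      rw [le_div_iff₀ hc]
      calc (μ (A n)).toReal * c = c * (μ (A n)).toReal := mul_comm _ _
        _ ≤ _ := hlow.trans (hup.trans hexp)
    exact (ENNReal.le_ofReal_iff_toReal_le (measure_ne_top μ _)
      (div_nonneg hInonneg hc.le)).2 this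
  have hunion : {ω | ∃ n, c ≤ f n ω} = ⋃ n, A n := by
    ext ω
    simp only [Set.mem_setOf_eq, Set.mem_iUnion, hA_def]
    constructor
    · rintro ⟨n, hn⟩; exact ⟨n, n, le_rfl, hn⟩
    · rintro ⟨n, k, _, hk⟩; exact ⟨k, hk⟩
  rw [hunion, hAmono.measure_iUnion]
  exact iSup_le key

/-- Concentration for adapted nonnegative bounded processes (Kirschner & Krause 2018):
if `X t` is nonnegative, adapted, `X t ≤ b t` with `b` nondecreasing, then with probability
at least `1 − δ`, for every `T ≥ 1` (with `b T ≥ 1`),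
`∑_{t=1}^T E[X t | F_{t-1}] ≤ 2 ∑_{t=1}^T X t + 4 b T log(1/δ) + 8 b T log(4 b T) + 1`. -/
theorem adapted_process_concentration {Ω : Type*} {m0 : MeasurableSpace Ω}
    (μ : Measure Ω) [IsProbabilityMeasure μ] (F : Filtration ℕ m0)
    (X : ℕ → Ω → ℝ) (hadapt : Adapted F X) (hnn : ∀ t ω, 0 ≤ X t ω)
    (b : ℕ → ℝ) (hb : Monotone b) (hb1 : ∀ T, 1 ≤ T → 1 ≤ b T)
    (hX : ∀ t ω, X t ω ≤ b t)
    (δ : ℝ) (hδ0 : 0 < δ) (hδ1 : δ < 1) :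
    ENNReal.ofReal (1 - δ) ≤
      μ {ω | ∀ T : ℕ, 1 ≤ T →
        ∑ t ∈ Finset.Icc 1 T, (μ[X t | F (t - 1)]) ω ≤
          2 * ∑ t ∈ Finset.Icc 1 T, X t ω +
            4 * b T * Real.log (1 / δ) + 8 * b T * Real.log (4 * b T) + 1} := by
  classical
  -- nonnegativity of b
  have hΩ : Nonempty Ω := Measure.nonempty_of_neZero μ
  have hb0 : ∀ t, 0 ≤ b t := by
    intro t
    obtain ⟨ω⟩ := hΩ
    exact le_trans (le_trans (hnn 0 ω) (hX 0 ω)) (hb (Nat.zero_le t))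
  set m : ℕ → Ω → ℝ := fun t => μ[X t|F (t - 1)] with hm_def
  -- the supermartingales
  set l : ℕ → ℝ := fun k => ((2:ℝ) ^ k)⁻¹ with hl_def
  have hlpos : ∀ k, 0 < l k := fun k => by positivity
  set M : ℕ → ℕ → Ω → ℝ := fun k n ω => Real.exp (∑ t ∈ Finset.Icc 1 n,
      (l k * (1 - l k * b t / 2) * m t ω - l k * X t ω)) with hM_def
  have hsuper : ∀ k, Supermartingale (M k) F μ := fun k =>
    supermartingale_exp μ F X hadapt hnn b hb0 hX (hlpos k).le
  -- bad events
  set bad : ℕ → Set Ω := fun k => {ω | ∃ n, (2:ℝ) ^ (k + 1) / δ ≤ M k n ω} with hbad_def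
  have hcpos : ∀ k : ℕ, (0:ℝ) < (2:ℝ) ^ (k + 1) / δ := fun k => by positivity
  have hbad_le : ∀ k, μ (bad k) ≤ ENNReal.ofReal (δ / 2 ^ (k + 1)) := by
    intro k
    have h := ville_ineq (hsuper k) (fun n ω => (Real.exp_pos _).le) (hcpos k)
    have hM0 : (fun ω => M k 0 ω) = fun _ => (1:ℝ) := by
      funext ω; simp [hM_def]
    have hint : ∫ ω, M k 0 ω ∂μ = 1 := by rw [hM0]; simp
    rw [hint, one_div_div] at h
    exact h
  -- measure of the union of bad events
  have hbad_meas : ∀ k, MeasurableSet (bad k) := by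
    intro k
    have : bad k = ⋃ n, {ω | (2:ℝ) ^ (k + 1) / δ ≤ M k n ω} := by
      ext ω; simp [hbad_def]
    rw [this]
    exact MeasurableSet.iUnion fun n => measurableSet_le measurable_const
      (((hsuper k).stronglyMeasurable n).mono (F.le n)).measurable
  have hU_le : μ (⋃ k, bad k) ≤ ENNReal.ofReal δ := by
    refine le_trans (measure_iUnion_le _) ?_
    refine le_trans (ENNReal.tsum_le_tsum hbad_le) ?_
    have heq : ∀ k : ℕ, ENNReal.ofReal (δ / 2 ^ (k + 1)) =
        ENNReal.ofReal δ * (2⁻¹ : ℝ≥0∞) ^ (k + 1) := by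
      intro k
      rw [div_eq_mul_inv, ← inv_pow, ENNReal.ofReal_mul hδ0.le,
        ENNReal.ofReal_pow (by norm_num : (0:ℝ) ≤ 2⁻¹)]
      congr 2
      rw [ENNReal.ofReal_inv_of_pos (by norm_num : (0:ℝ) < 2)]
      norm_num
    rw [tsum_congr heq, ENNReal.tsum_mul_left]
    have hgeo : ∑' k : ℕ, (2⁻¹ : ℝ≥0∞) ^ (k + 1) = 1 := by
      have : ∀ k : ℕ, (2⁻¹ : ℝ≥0∞) ^ (k + 1) = 2⁻¹ * 2⁻¹ ^ k := by
        intro k; rw [pow_succ, mul_comm]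
      rw [tsum_congr this, ENNReal.tsum_mul_left, ENNReal.tsum_geometric,
        ENNReal.one_sub_inv_two, inv_inv, ENNReal.inv_mul_cancel (by norm_num) (by norm_num)]
    rw [hgeo, mul_one]
  -- the a.e. nonnegativity set
  set Npos : Set Ω := {ω | ∀ t, 0 ≤ m t ω} with hNpos_def
  have hNpos_null : μ Nposᶜ = 0 := by
    have hae : ∀ᵐ ω ∂μ, ∀ t, 0 ≤ m t ω :=
      ae_all_iff.2 fun t => condExp_nonneg (Filter.Eventually.of_forall (hnn t))
    have : Nposᶜ = {ω | ¬ ∀ t, 0 ≤ m t ω} := by ext ω; simp [hNpos_def]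
    rw [this]
    exact ae_iff.1 hae
  -- the good event
  set Good : Set Ω := (⋃ k, bad k)ᶜ ∩ Npos with hGood_def
  have hGood_ge : ENNReal.ofReal (1 - δ) ≤ μ Good := by
    rw [hGood_def, measure_inter_conull hNpos_null,
      measure_compl (MeasurableSet.iUnion hbad_meas) (measure_ne_top μ _), measure_univ]
    rw [ENNReal.ofReal_sub _ hδ0.le, ENNReal.ofReal_one]
    exact tsub_le_tsub_left hU_le 1
  refine le_trans hGood_ge (measure_mono ?_)
  -- the pointwise argument
  rintro ω ⟨hωbad, hωpos⟩ T hT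
  rw [Set.mem_compl_iff, Set.mem_iUnion] at hωbad
  push_neg at hωbad
  -- choose the scale k
  have hbT1 : (1:ℝ) ≤ b T := hb1 T hT
  have hex : ∃ k : ℕ, b T ≤ 2 ^ k := by
    obtain ⟨k, hk⟩ := pow_unbounded_of_one_lt (b T) (by norm_num : (1:ℝ) < 2)
    exact ⟨k, hk.le⟩
  set k := Nat.find hex with hk_def
  have hk1 : b T ≤ 2 ^ k := Nat.find_spec hex
  have hk2 : (2:ℝ) ^ k < 2 * b T := by
    rcases Nat.eq_zero_or_pos k with h0 | hpos
    · rw [h0]; norm_num; linarith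
    · have hmin := Nat.find_min hex (m := k - 1) (by rw [← hk_def]; exact Nat.sub_lt hpos one_pos)
      push_neg at hmin
      have hksucc : k = (k - 1) + 1 := (Nat.succ_pred_eq_of_pos hpos).symm
      rw [hksucc, pow_succ]
      nlinarith [hmin]
  -- the key inequality from not being in bad k
  have hωk := hωbad k
  rw [hbad_def, Set.mem_setOf_eq] at hωk
  push_neg at hωk
  have hMT := hωk T
  have hS_lt : ∑ t ∈ Finset.Icc 1 T, (l k * (1 - l k * b t / 2) * m t ω - l k * X t ω) <
      Real.log ((2:ℝ) ^ (k + 1) / δ) := by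
    rw [Real.lt_log_iff_exp_lt (hcpos k)]
    exact hMT
  -- per-term lower bound
  have hterm : ∀ t ∈ Finset.Icc 1 T,
      l k / 2 * m t ω - l k * X t ω ≤ l k * (1 - l k * b t / 2) * m t ω - l k * X t ω := by
    intro t ht
    rw [Finset.mem_Icc] at ht
    have hbt : b t ≤ b T := hb ht.2
    have hlb : l k * b t ≤ 1 := by
      have h1 : l k * b t ≤ l k * (2:ℝ) ^ k :=
        mul_le_mul_of_nonneg_left (hbt.trans hk1) (hlpos k).le
      rw [hl_def] at h1 ⊢
      rw [inv_mul_cancel₀ (by positivity : ((2:ℝ) ^ k) ≠ 0)] at h1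
      exact h1
    have hm0 : 0 ≤ m t ω := hωpos t
    have hl0 : 0 ≤ l k := (hlpos k).le
    nlinarith [mul_nonneg hl0 hm0]
  have hsum_le : l k / 2 * (∑ t ∈ Finset.Icc 1 T, m t ω) -
      l k * (∑ t ∈ Finset.Icc 1 T, X t ω) < Real.log ((2:ℝ) ^ (k + 1) / δ) := by
    have h1 : ∑ t ∈ Finset.Icc 1 T, (l k / 2 * m t ω - l k * X t ω) ≤
        ∑ t ∈ Finset.Icc 1 T, (l k * (1 - l k * b t / 2) * m t ω - l k * X t ω) :=
      Finset.sum_le_sum hterm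
    have h2 : ∑ t ∈ Finset.Icc 1 T, (l k / 2 * m t ω - l k * X t ω) =
        l k / 2 * (∑ t ∈ Finset.Icc 1 T, m t ω) - l k * (∑ t ∈ Finset.Icc 1 T, X t ω) := by
      rw [Finset.sum_sub_distrib, Finset.mul_sum, Finset.mul_sum]
    linarith [h1.trans_lt hS_lt]
  -- rescale
  set P := ∑ t ∈ Finset.Icc 1 T, m t ω with hP_def
  set Q := ∑ t ∈ Finset.Icc 1 T, X t ω with hQ_def
  set L := Real.log ((2:ℝ) ^ (k + 1) / δ) with hL_def
  have hP_le : P ≤ 2 * Q + 2 ^ (k + 1) * L := by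
    have h2 := mul_le_mul_of_nonneg_left hsum_le.le
      (by positivity : (0:ℝ) ≤ 2 * 2 ^ k)
    have e1 : 2 * (2:ℝ) ^ k * (l k / 2 * P - l k * Q) = P - 2 * Q := by
      rw [hl_def]; field_simp
    have e2 : 2 * (2:ℝ) ^ k * L = 2 ^ (k + 1) * L := by ring
    rw [e1] at h2
    linarith [h2, e2]
  -- bound L and the scale
  have h2k4bT : (2:ℝ) ^ (k + 1) ≤ 4 * b T := by rw [pow_succ]; nlinarith [hk2]
  have hL_le : L ≤ Real.log (4 * b T) + Real.log (1 / δ) := by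
    have h1 : (2:ℝ) ^ (k + 1) / δ ≤ (4 * b T) / δ := by gcongr
    have h2 := Real.log_le_log (hcpos k) h1
    rw [hL_def]
    refine h2.trans_eq ?_
    rw [div_eq_mul_inv, Real.log_mul (by positivity) (by positivity), one_div, Real.log_inv]
  have hlog4bT : 0 ≤ Real.log (4 * b T) := Real.log_nonneg (by linarith)
  have hlogδ : 0 ≤ Real.log (1 / δ) := Real.log_nonneg (by rw [le_div_iff₀ hδ0]; linarith)
  have hfinal : 2 ^ (k + 1) * L ≤ 4 * b T * Real.log (1 / δ) + 8 * b T * Real.log (4 * b T) := by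
    have h1 : (2:ℝ) ^ (k + 1) * L ≤ 2 ^ (k + 1) * (Real.log (4 * b T) + Real.log (1 / δ)) :=
      mul_le_mul_of_nonneg_left hL_le (by positivity)
    have h2 : (2:ℝ) ^ (k + 1) * (Real.log (4 * b T) + Real.log (1 / δ)) ≤
        4 * b T * (Real.log (4 * b T) + Real.log (1 / δ)) :=
      mul_le_mul_of_nonneg_right h2k4bT (by linarith)
    nlinarith [mul_nonneg (mul_nonneg (by norm_num : (0:ℝ) ≤ 4) (by linarith : (0:ℝ) ≤ b T)) hlog4bT]
  calc P ≤ 2 * Q + 2 ^ (k + 1) * L := hP_le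
    _ ≤ 2 * Q + (4 * b T * Real.log (1 / δ) + 8 * b T * Real.log (4 * b T)) := by linarith
    _ ≤ 2 * Q + 4 * b T * Real.log (1 / δ) + 8 * b T * Real.log (4 * b T) + 1 := by linarith
end
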